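/- Let F be a free group of finite rank, let H be a finitely generated subgroup of F, and let k ≥ 1. Then there exist finitely many elements w₀ = 1, w₁, …, w_t ∈ F, each of relative order in H dividing k, such that the set of k-roots {g ∈ F : g^k ∈ H} equals the union over i = 0, …, t of the sets { h⁻¹ x w_i h : h ∈ H, x ∈ H ∩ w_i⁻¹Hw_i ∩ w_i⁻²Hw_i² ∩ ⋯ ∩ w_i^{-(k-1)}Hw_i^{k-1} }, i.e. the H-conjugates of the cosets (H ∩ H^{w_i} ∩ ⋯ ∩ H^{w_i^{k-1}}) w_i. -/

import Mathlib

set_option linter.unusedSectionVars false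

/-- The relative order of `g` in the subgroup `H`: the least `k ≥ 1` with `g ^ k ∈ H`,
and `0` if no such `k` exists. -/
noncomputable def relOrd {G : Type*} [Group G] (H : Subgroup G) (g : G) : ℕ :=
  sInf {k : ℕ | 1 ≤ k ∧ g ^ k ∈ H}

open List

namespace KR

section words
variable {α : Type*} [DecidableEq α]

/-- reduced word predicate via Chain' -/
def RW (w : List (α × Bool)) : Prop := w.Chain' (fun x y => ¬(x.1 = y.1 ∧ x.2 = !y.2))

theorem rw_of_reduce_eq {w : List (α × Bool)} (h : FreeGroup.reduce w = w) : RW w := by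
  induction w with
  | nil => exact List.isChain_nil
  | cons x l ih =>
    rw [FreeGroup.reduce.cons] at h
    rcases hrl : FreeGroup.reduce l with _ | ⟨hd, tl⟩
    · rw [hrl] at h
      simp only at h
      have : l = [] := by cases h; rfl
      subst this; exact List.isChain_singleton x
    · rw [hrl] at h
      replace h : (if x.1 = hd.1 ∧ x.2 = !hd.2 then tl else x :: hd :: tl) = x :: l := h
      by_cases hc : x.1 = hd.1 ∧ x.2 = !hd.2
      · rw [if_pos hc] at h
        exfalso
        have h1 : tl.length + 1 = (FreeGroup.reduce l).length := by rw [hrl]; simp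
        have h2 : (FreeGroup.reduce l).length ≤ l.length := (FreeGroup.reduce.red).length_le
        have h3 : tl.length = l.length + 1 := by rw [h]; simp
        omega
      · rw [if_neg hc] at h
        have hl : l = hd :: tl := by
          have := congrArg List.tail h; simp at this; exact this.symm
        have hrll : FreeGroup.reduce l = l := by rw [hrl, hl]
        have := ih hrll
        rw [hl]
        exact List.isChain_cons_cons.mpr ⟨hc, hl ▸ this⟩

theorem reduce_eq_of_rw {w : List (α × Bool)} (h : RW w) : FreeGroup.reduce w = w := by
  induction w with
  | nil => rfl
  | cons x l ih =>
    have hl : RW l := h.tail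
    rw [FreeGroup.reduce.cons, ih hl]
    cases l with
    | nil => rfl
    | cons hd tl =>
      have hc : ¬(x.1 = hd.1 ∧ x.2 = !hd.2) := (List.isChain_cons_cons.mp h).1
      show (if x.1 = hd.1 ∧ x.2 = !hd.2 then tl else x :: hd :: tl) = _
      rw [if_neg hc]

theorem rw_toWord (x : FreeGroup α) : RW x.toWord := rw_of_reduce_eq (FreeGroup.reduce_toWord x)

theorem toWord_mk_eq {w : List (α × Bool)} (h : RW w) : (FreeGroup.mk w).toWord = w := by
  rw [FreeGroup.toWord_mk, reduce_eq_of_rw h]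


theorem mk_singleton_inv (x : α × Bool) :
    FreeGroup.mk [(x.1, !x.2)] = (FreeGroup.mk [x])⁻¹ := by
  rw [FreeGroup.inv_mk]
  simp [FreeGroup.invRev]

theorem cancel_aux : ∀ (N : ℕ) (s t : List (α × Bool)), s.length ≤ N → RW s → RW t →
    ∃ a b, s = a ++ b ∧ b.length ≤ t.length ∧
      FreeGroup.mk (t.take b.length) = (FreeGroup.mk b)⁻¹ ∧
      (FreeGroup.mk s * FreeGroup.mk t).toWord = a ++ t.drop b.length := by
  intro N
  induction N with
  | zero =>
    intro s t hs _ ht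
    have : s = [] := List.eq_nil_of_length_eq_zero (Nat.le_zero.mp hs)
    subst this
    exact ⟨[], [], rfl, by simp, by simp, by simpa using toWord_mk_eq ht⟩
  | succ N ih =>
    intro s t hsN hs ht
    by_cases hred : RW (s ++ t)
    · refine ⟨s, [], by simp, by simp, by simp, ?_⟩
      rw [FreeGroup.mul_mk, toWord_mk_eq hred]
      simp
    · -- junction must cancel
      have hx : ∃ x ∈ s.getLast?, ∃ y ∈ t.head?, (x.1 = y.1 ∧ x.2 = !y.2) := by
        have hC : ¬ ∀ x ∈ s.getLast?, ∀ y ∈ t.head?, ¬(x.1 = y.1 ∧ x.2 = !y.2) :=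
          fun c => hred (List.isChain_append.mpr ⟨hs, ht, c⟩)
        push_neg at hC
        exact hC
      obtain ⟨x, hxl, y, hyh, hc⟩ := hx
      rcases s.eq_nil_or_concat with rfl | ⟨s', x', rfl⟩
      · simp at hxl
      · simp only [List.concat_eq_append] at hxl hs hsN hred ⊢
        have hx' : x = x' := by
          rw [List.getLast?_concat] at hxl; exact (by simpa using hxl : x' = x).symm
        subst hx'
        rcases t with _ | ⟨y', t'⟩
        · simp at hyh
        · have hy' : y = y' := by exact (by simpa using hyh : y' = y).symm
          subst hy'
          have hyx : y = (x.1, !x.2) := by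
            obtain ⟨h1, h2⟩ := hc
            have : y.2 = !x.2 := by
              cases hb : x.2 <;> cases hb' : y.2 <;> simp_all
            exact Prod.ext h1.symm this
          have hs' : RW s' := (List.isChain_append.mp hs).1
          have ht' : RW t' := ht.tail
          have hsN' : s'.length ≤ N := by
            have := hsN; simp at this; omega
          obtain ⟨a, b, hab, hbl, hbt, htw⟩ := ih s' t' hsN' hs' ht'
          have key : FreeGroup.mk (s' ++ [x]) * FreeGroup.mk (y :: t')
              = FreeGroup.mk s' * FreeGroup.mk t' := by
            have h1 : FreeGroup.mk (s' ++ [x]) = FreeGroup.mk s' * FreeGroup.mk [x] :=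
              (FreeGroup.mul_mk).symm
            have h2 : FreeGroup.mk (y :: t') = FreeGroup.mk [y] * FreeGroup.mk t' := by
              rw [FreeGroup.mul_mk, List.singleton_append]
            rw [h1, h2, hyx, mk_singleton_inv]
            group
          refine ⟨a, b ++ [x], by rw [hab, List.append_assoc], by simp; omega, ?_, ?_⟩
          · have : (y :: t').take (b ++ [x]).length = y :: t'.take b.length := by simp
            rw [this]
            have : FreeGroup.mk (y :: t'.take b.length)
                = FreeGroup.mk [y] * FreeGroup.mk (t'.take b.length) := by
              rw [FreeGroup.mul_mk, List.singleton_append]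
            rw [this, hyx, mk_singleton_inv, hbt, ← FreeGroup.mul_mk]
            rw [mul_inv_rev]
          · rw [key, htw]
            simp

/-- cyclic junction condition -/
def CJ (w : List (α × Bool)) : Prop :=
  ∀ x ∈ w.getLast?, ∀ y ∈ w.head?, ¬(x.1 = y.1 ∧ x.2 = !y.2)

theorem cyc_decomp_aux : ∀ (N : ℕ) (g : FreeGroup α), g.toWord.length ≤ N →
    ∃ u c : FreeGroup α, g = u * c * u⁻¹ ∧ CJ c.toWord ∧
      g.toWord = u.toWord ++ c.toWord ++ (u⁻¹).toWord := by
  intro N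
  induction N with
  | zero =>
    intro g hg
    have h0 : g.toWord = [] := List.eq_nil_of_length_eq_zero (Nat.le_zero.mp hg)
    have hg1 : g = 1 := FreeGroup.toWord_eq_nil_iff.mp h0
    refine ⟨1, 1, by rw [hg1]; group, ?_, ?_⟩
    · simp [CJ, FreeGroup.toWord_one]
    · rw [hg1]; simp [FreeGroup.toWord_one]
  | succ N ih =>
    intro g hg
    by_cases hcj : CJ g.toWord
    · exact ⟨1, g, by group, hcj, by simp [FreeGroup.toWord_one]⟩
    · have hx : ∃ x ∈ g.toWord.getLast?, ∃ y ∈ g.toWord.head?, (x.1 = y.1 ∧ x.2 = !y.2) := by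
        have hC : ¬ ∀ x ∈ g.toWord.getLast?, ∀ y ∈ g.toWord.head?,
            ¬(x.1 = y.1 ∧ x.2 = !y.2) := hcj
        push_neg at hC
        exact hC
      obtain ⟨x, hxl, y, hyh, hc⟩ := hx
      -- g.toWord = y :: middle ++ [x]
      rcases hl : g.toWord with _ | ⟨y', t⟩
      · rw [hl] at hyh; simp at hyh
      · have hy : y = y' := by rw [hl] at hyh; exact (by simpa using hyh : y' = y).symm
        subst hy
        rcases t.eq_nil_or_concat with rfl | ⟨mid, x', ht⟩
        · -- word = [y], so x = y, cancel x x impossible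
          exfalso
          rw [hl] at hxl
          have : x = y := by exact (by simpa using hxl : y = x).symm
          subst this
          rcases hc with ⟨_, h2⟩
          simp at h2
        · subst ht
          simp only [List.concat_eq_append] at hl
          have hxx : x = x' := by
            rw [hl, ← List.cons_append, List.getLast?_concat] at hxl
            exact (by simpa using hxl : x' = x).symm
          subst hxx
          have hrw : RW (y :: (mid ++ [x])) := hl ▸ rw_toWord g
          have hrw2 : RW ((y :: mid) ++ [x]) := by simpa using hrw
          have hmidrw : RW (y :: mid) := (List.isChain_append.mp hrw2).1
          have hmid : RW mid := hmidrw.tail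
          have hlen : mid.length ≤ N := by
            have := hg; rw [hl] at this; simp at this; omega
          obtain ⟨u', c', hdec, hcj', hw⟩ := ih (FreeGroup.mk mid) (by rw [toWord_mk_eq hmid]; exact hlen)
          rw [toWord_mk_eq hmid] at hw
          have hxy : x = (y.1, !y.2) := by
            obtain ⟨h1, h2⟩ := hc
            refine Prod.ext h1 ?_
            cases hb : x.2 <;> cases hb' : y.2 <;> simp_all
          refine ⟨FreeGroup.mk [y] * u', c', ?_, hcj', ?_⟩
          · have hgm : g = FreeGroup.mk [y] * FreeGroup.mk mid * FreeGroup.mk [x] := by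
              conv_lhs => rw [← FreeGroup.mk_toWord (x := g), hl]
              rw [FreeGroup.mul_mk, FreeGroup.mul_mk]
              simp
            rw [hgm, hdec, hxy, mk_singleton_inv]
            group
          · -- toWord equality
            have hyu : (FreeGroup.mk [y] * u').toWord = y :: u'.toWord := by
              have h1 : FreeGroup.mk [y] * u' = FreeGroup.mk (y :: u'.toWord) := by
                conv_lhs => rw [← FreeGroup.mk_toWord (x := u')]
                rw [FreeGroup.mul_mk, List.singleton_append]
              rw [h1]
              apply toWord_mk_eq
              have : RW ((y :: u'.toWord) ++ (c'.toWord ++ (u'⁻¹).toWord)) := by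
                rw [List.cons_append, ← List.append_assoc, ← hw]
                exact hmidrw
              exact (List.isChain_append.mp this).1
            have hyuinv : ((FreeGroup.mk [y] * u')⁻¹).toWord = (u'⁻¹).toWord ++ [x] := by
              rw [FreeGroup.toWord_inv, hyu, FreeGroup.invRev, FreeGroup.toWord_inv]
              simp [FreeGroup.invRev, hxy]
            rw [hyu, hyuinv]
            simp only [List.concat_eq_append]
            rw [hw]
            simp [List.append_assoc]

section powers
variable {u c : FreeGroup α}

theorem flatten_replicate_nil (m : ℕ) :
    (List.replicate m ([] : List (α × Bool))).flatten = [] := by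
  induction m with
  | zero => rfl
  | succ m ih => rw [List.replicate_succ, List.flatten_cons, ih]; rfl

theorem head?_flatten_replicate {wc : List (α × Bool)} (hne : wc ≠ []) (m : ℕ) (hm : 1 ≤ m) :
    (List.replicate m wc).flatten.head? = wc.head? := by
  obtain ⟨m', rfl⟩ : ∃ m', m = m' + 1 := ⟨m - 1, by omega⟩
  rw [List.replicate_succ, List.flatten_cons, List.head?_append_of_ne_nil _ hne]

theorem getLast?_flatten_replicate {wc : List (α × Bool)} (hne : wc ≠ []) (m : ℕ) (hm : 1 ≤ m) :
    (List.replicate m wc).flatten.getLast? = wc.getLast? := by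
  obtain ⟨m', rfl⟩ : ∃ m', m = m' + 1 := ⟨m - 1, by omega⟩
  rw [List.replicate_succ', List.flatten_append, List.flatten_cons, List.flatten_nil,
    List.append_nil, List.getLast?_append_of_ne_nil _ hne]

theorem chain'_flatten_replicate {wc : List (α × Bool)} (hc : RW wc) (hcj : CJ wc) (m : ℕ) :
    RW ((List.replicate m wc).flatten) := by
  induction m with
  | zero => exact List.isChain_nil
  | succ m ih =>
    rw [List.replicate_succ, List.flatten_cons]
    refine List.isChain_append.mpr ⟨hc, ih, ?_⟩
    intro x hx y hy
    rcases Nat.eq_zero_or_pos m with rfl | hm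
    · simp at hy
    · have hne : wc ≠ [] := by rintro rfl; simp at hx
      rw [head?_flatten_replicate hne m hm] at hy
      exact hcj x hx y hy

theorem decomp_pow (hcj : CJ c.toWord)
    (hw : RW (u.toWord ++ c.toWord ++ (u⁻¹).toWord)) :
    (∀ m : ℕ, 1 ≤ m → ((u * c * u⁻¹) ^ m).toWord
       = u.toWord ++ (List.replicate m c.toWord).flatten ++ (u⁻¹).toWord)
    ∧ (∀ j : ℕ, (u * c ^ j).toWord = u.toWord ++ (List.replicate j c.toWord).flatten) := by
  -- basic pieces
  have hu : RW u.toWord := rw_toWord u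
  have huinv : RW (u⁻¹).toWord := rw_toWord u⁻¹
  have hc : RW c.toWord := rw_toWord c
  have hsplit := List.isChain_append.mp ((List.append_assoc _ _ _) ▸ hw)
  have J1 : ∀ x ∈ u.toWord.getLast?, ∀ y ∈ (c.toWord ++ (u⁻¹).toWord).head?,
      ¬(x.1 = y.1 ∧ x.2 = !y.2) := hsplit.2.2
  have hcu : Chain' (fun x y => ¬(x.1 = y.1 ∧ x.2 = !y.2)) (c.toWord ++ (u⁻¹).toWord) :=
    hsplit.2.1
  have J2 : ∀ x ∈ c.toWord.getLast?, ∀ y ∈ (u⁻¹).toWord.head?, ¬(x.1 = y.1 ∧ x.2 = !y.2) :=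
    (List.isChain_append.mp hcu).2.2
  -- reducedness of wu ++ J_m ++ wuinv for m ≥ 1
  have key : ∀ m : ℕ, 1 ≤ m →
      RW (u.toWord ++ ((List.replicate m c.toWord).flatten ++ (u⁻¹).toWord)) := by
    intro m hm
    refine List.isChain_append.mpr ⟨hu, ?_, ?_⟩
    · refine List.isChain_append.mpr ⟨chain'_flatten_replicate hc hcj m, huinv, ?_⟩
      intro x hx y hy
      have hne : c.toWord ≠ [] := by
        rintro hnil
        rw [hnil, flatten_replicate_nil] at hx
        simp at hx
      rw [getLast?_flatten_replicate hne m hm] at hx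
      exact J2 x hx y hy
    · intro x hx y hy
      by_cases hne : c.toWord = []
      · rw [hne, flatten_replicate_nil, List.nil_append] at hy
        refine J1 x hx y ?_
        rw [hne, List.nil_append]
        exact hy
      · rw [List.head?_append_of_ne_nil _ (by
            intro hcon
            exact hne (by
              cases m with
              | zero => omega
              | succ m =>
                rw [List.replicate_succ, List.flatten_cons] at hcon
                exact List.append_eq_nil_iff.mp hcon |>.1))] at hy
        rw [head?_flatten_replicate hne m hm] at hy
        refine J1 x hx y ?_
        rw [List.head?_append_of_ne_nil _ hne]
        exact hy
  have keyJ : ∀ j : ℕ, RW (u.toWord ++ (List.replicate j c.toWord).flatten) := by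
    intro j
    refine List.isChain_append.mpr ⟨hu, chain'_flatten_replicate hc hcj j, ?_⟩
    intro x hx y hy
    have hne : c.toWord ≠ [] := by
      rintro hnil; rw [hnil, flatten_replicate_nil] at hy; simp at hy
    have hj : 1 ≤ j := by
      rcases Nat.eq_zero_or_pos j with rfl | h; · simp at hy
      · exact h
    rw [head?_flatten_replicate hne j hj] at hy
    refine J1 x hx y ?_
    rw [List.head?_append_of_ne_nil _ hne]
    exact hy
  constructor
  · intro m hm
    have h1 : (u * c * u⁻¹) ^ m = u * c ^ m * u⁻¹ := conj_pow
    have e3 : FreeGroup.mk ((List.replicate m c.toWord).flatten) = c ^ m := by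
      rw [← FreeGroup.pow_mk, FreeGroup.mk_toWord]
    have h2 : FreeGroup.mk (u.toWord ++ ((List.replicate m c.toWord).flatten ++ (u⁻¹).toWord))
        = u * c ^ m * u⁻¹ := by
      rw [← FreeGroup.mul_mk, ← FreeGroup.mul_mk, e3, FreeGroup.mk_toWord,
        FreeGroup.mk_toWord, mul_assoc]
    rw [h1, ← h2, toWord_mk_eq (key m hm), List.append_assoc]
  · intro j
    have e3 : FreeGroup.mk ((List.replicate j c.toWord).flatten) = c ^ j := by
      rw [← FreeGroup.pow_mk, FreeGroup.mk_toWord]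
    have h2 : FreeGroup.mk (u.toWord ++ (List.replicate j c.toWord).flatten)
        = u * c ^ j := by
      rw [← FreeGroup.mul_mk, e3, FreeGroup.mk_toWord]
    rw [← h2, toWord_mk_eq (keyJ j)]
end powers

theorem toWord_length_mul_le (x y : FreeGroup α) :
    (x * y).toWord.length ≤ x.toWord.length + y.toWord.length := by
  have := (FreeGroup.toWord_mul_sublist x y).length_le
  simpa using this

theorem toWord_length_inv (x : FreeGroup α) : (x⁻¹).toWord.length = x.toWord.length := by
  rw [FreeGroup.toWord_inv, FreeGroup.invRev_length]

theorem toWord_length_mk_le (w : List (α × Bool)) :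
    (FreeGroup.mk w).toWord.length ≤ w.length := by
  rw [FreeGroup.toWord_mk]
  exact (FreeGroup.reduce.red).length_le

theorem prefix_coset (H : Subgroup (FreeGroup α)) (B : ℕ) :
    ∀ (L : List (FreeGroup α)), (∀ z ∈ L, z ∈ H ∧ z.toWord.length ≤ B) →
    ∀ q, q <+: (L.prod).toWord →
    ∃ hh r, hh ∈ H ∧ r.toWord.length ≤ 2 * B ∧ FreeGroup.mk q = hh * r := by
  intro L
  induction L using List.reverseRecOn with
  | nil =>
    intro _ q hq
    have : q = [] := List.prefix_nil.mp (by simpa [FreeGroup.toWord_one] using hq)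
    subst this
    exact ⟨1, 1, H.one_mem, by simp [FreeGroup.toWord_one], by
      rw [← FreeGroup.one_eq_mk]; group⟩
  | append_singleton L₀ z ih =>
    intro hmem q hq
    have hz := hmem z (by simp)
    obtain ⟨a, b, hab, hbl, hbt, htw⟩ :=
      cancel_aux (L₀.prod).toWord.length (L₀.prod).toWord z.toWord le_rfl
        (rw_toWord _) (rw_toWord _)
    have key : L₀.prod * z = FreeGroup.mk (L₀.prod).toWord * FreeGroup.mk z.toWord := by
      rw [FreeGroup.mk_toWord, FreeGroup.mk_toWord]
    have htw' : ((L₀ ++ [z]).prod).toWord = a ++ z.toWord.drop b.length := by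
      have hprod : (L₀ ++ [z]).prod = L₀.prod * z := by simp
      rw [hprod, key]
      exact htw
    rw [htw'] at hq
    by_cases hlen : q.length ≤ a.length
    · -- q is a prefix of a, hence of (L₀.prod).toWord
      have hqa : q <+: a := List.prefix_of_prefix_length_le hq (a.prefix_append _) hlen
      have hqs : q <+: (L₀.prod).toWord := hqa.trans (hab ▸ a.prefix_append b)
      exact ih (fun w hw => hmem w (by simp [hw])) q hqs
    · -- q = a ++ s' with s' a prefix of the dropped tail
      have haq : a <+: q := by
        refine List.prefix_of_prefix_length_le (a.prefix_append _) hq ?_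
        omega
      obtain ⟨s', rfl⟩ := haq
      have hs' : s' <+: z.toWord.drop b.length := by
        obtain ⟨rest, hrest⟩ := hq
        rw [List.append_assoc] at hrest
        exact ⟨rest, (List.append_cancel_left hrest)⟩
      -- mk (a ++ s') = L₀.prod * ((mk b)⁻¹ * mk s')
      have hmka : FreeGroup.mk a = L₀.prod * (FreeGroup.mk b)⁻¹ := by
        have : FreeGroup.mk ((L₀.prod).toWord) = FreeGroup.mk a * FreeGroup.mk b := by
          rw [FreeGroup.mul_mk, ← hab]
        rw [FreeGroup.mk_toWord] at this
        rw [this]; group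
      refine ⟨L₀.prod, (FreeGroup.mk b)⁻¹ * FreeGroup.mk s', ?_, ?_, ?_⟩
      · exact list_prod_mem (fun w hw => (hmem w (by simp [hw])).1)
      · have h1 : ((FreeGroup.mk b)⁻¹).toWord.length ≤ B := by
          rw [toWord_length_inv]
          calc (FreeGroup.mk b).toWord.length ≤ b.length := toWord_length_mk_le b
            _ ≤ z.toWord.length := hbl
            _ ≤ B := hz.2
        have h2 : (FreeGroup.mk s').toWord.length ≤ B := by
          calc (FreeGroup.mk s').toWord.length ≤ s'.length := toWord_length_mk_le s'
            _ ≤ (z.toWord.drop b.length).length := hs'.length_le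
            _ ≤ z.toWord.length := by simp
            _ ≤ B := hz.2
        calc ((FreeGroup.mk b)⁻¹ * FreeGroup.mk s').toWord.length
            ≤ ((FreeGroup.mk b)⁻¹).toWord.length + (FreeGroup.mk s').toWord.length :=
              toWord_length_mul_le _ _
          _ ≤ 2 * B := by omega
      · rw [← FreeGroup.mul_mk, hmka]
        group

theorem geo (H : Subgroup (FreeGroup α)) (V : Finset (FreeGroup α))
    (hV : Subgroup.closure (V : Set (FreeGroup α)) = H) (B : ℕ)
    (hB : ∀ z ∈ V, z.toWord.length ≤ B) {k : ℕ} (hk : 1 ≤ k) (g : FreeGroup α)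
    (hg : g ^ k ∈ H) :
    ∃ u : FreeGroup α, ∀ j, j ≤ k →
      ∃ r : FreeGroup α, r.toWord.length ≤ 2 * B ∧ g ^ j * u * r⁻¹ ∈ H := by
  obtain ⟨u, c, hdec, hcj, hw⟩ := cyc_decomp_aux g.toWord.length g le_rfl
  have hwRW : RW (u.toWord ++ c.toWord ++ (u⁻¹).toWord) := hw ▸ rw_toWord g
  obtain ⟨hpow, hmid⟩ := decomp_pow hcj hwRW
  have h1 : g ^ k ∈ Subgroup.closure (V : Set (FreeGroup α)) := by rw [hV]; exact hg
  have h2 : g ^ k ∈ Submonoid.closure ((V : Set (FreeGroup α)) ∪ (V : Set (FreeGroup α))⁻¹) := by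
    rw [← Subgroup.closure_toSubmonoid]
    exact h1
  obtain ⟨L, hL, hLprod⟩ := Submonoid.exists_list_of_mem_closure h2
  have hLH : ∀ z ∈ L, z ∈ H ∧ z.toWord.length ≤ B := by
    intro z hzL
    rcases hL z hzL with hz | hz
    · exact ⟨by rw [← hV]; exact Subgroup.subset_closure hz, hB z hz⟩
    · have hzi : z⁻¹ ∈ V := Set.mem_inv.mp hz
      constructor
      · have : z⁻¹ ∈ H := by rw [← hV]; exact Subgroup.subset_closure hzi
        simpa using H.inv_mem this
      · rw [← toWord_length_inv]
        exact hB z⁻¹ hzi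
  refine ⟨u, ?_⟩
  intro j hj
  have hgj : g ^ j = u * c ^ j * u⁻¹ := by rw [hdec]; exact conj_pow
  have hsplit : (List.replicate k c.toWord).flatten
      = (List.replicate j c.toWord).flatten ++ (List.replicate (k - j) c.toWord).flatten := by
    rw [← List.flatten_append, ← List.replicate_add]
    congr 2
    omega
  have hpre : (u.toWord ++ (List.replicate j c.toWord).flatten) <+: (L.prod).toWord := by
    rw [hLprod, show g ^ k = (u * c * u⁻¹) ^ k by rw [hdec], hpow k hk, hsplit]
    exact ⟨(List.replicate (k - j) c.toWord).flatten ++ (u⁻¹).toWord, by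
      simp [List.append_assoc]⟩
  obtain ⟨hh, r, hhH, hrlen, hmk⟩ := prefix_coset H B L hLH _ hpre
  have hmkj : FreeGroup.mk (u.toWord ++ (List.replicate j c.toWord).flatten) = u * c ^ j := by
    rw [← hmid j, FreeGroup.mk_toWord]
  refine ⟨r, hrlen, ?_⟩
  have : g ^ j * u * r⁻¹ = hh := by
    rw [hgj, show u * c ^ j * u⁻¹ * u * r⁻¹ = (u * c ^ j) * r⁻¹ by group,
      ← hmkj, hmk]
    group
  rw [this]
  exact hhH

end words

section grouplayer
variable {G : Type*} [Group G]

theorem relOrd_dvd (H : Subgroup G) (g : G) {k : ℕ} (hk : 1 ≤ k) (hg : g ^ k ∈ H) :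
    relOrd H g ∣ k := by
  have hne : k ∈ {m : ℕ | 1 ≤ m ∧ g ^ m ∈ H} := ⟨hk, hg⟩
  have hmem := Nat.sInf_mem (Set.nonempty_of_mem hne)
  have hrel : relOrd H g = sInf {m : ℕ | 1 ≤ m ∧ g ^ m ∈ H} := rfl
  rw [hrel]
  set d := sInf {m : ℕ | 1 ≤ m ∧ g ^ m ∈ H} with hd
  obtain ⟨hd1, hdH⟩ := hmem
  have hr : g ^ (k % d) ∈ H := by
    have : g ^ k = (g ^ d) ^ (k / d) * g ^ (k % d) := by
      rw [← pow_mul, ← pow_add]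
      congr 1
      exact (Nat.div_add_mod k d).symm
    have h2 : g ^ (k % d) = ((g ^ d) ^ (k / d))⁻¹ * g ^ k := by
      rw [this]; group
    rw [h2]
    exact H.mul_mem (H.inv_mem (H.pow_mem hdH _)) hg
  rcases Nat.eq_zero_or_pos (k % d) with h0 | hpos
  · exact Nat.dvd_of_mod_eq_zero h0
  · exfalso
    have hlt : k % d < d := Nat.mod_lt _ (by omega)
    have : d ≤ k % d := Nat.sInf_le ⟨hpos, hr⟩
    omega

theorem conj_chain (H : Subgroup G) {w y : G} {k : ℕ}
    (hy : ∀ j, j < k → w ^ j * y * (w ^ j)⁻¹ ∈ H) :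
    ∀ j, j ≤ k → ∃ c ∈ H, (y * w) ^ j = c * w ^ j := by
  intro j
  induction j with
  | zero => exact fun _ => ⟨1, H.one_mem, by simp⟩
  | succ j ih =>
    intro hj
    obtain ⟨c, hc, hcw⟩ := ih (by omega)
    refine ⟨c * (w ^ j * y * (w ^ j)⁻¹), H.mul_mem hc (hy j (by omega)), ?_⟩
    rw [pow_succ (y * w), hcw, pow_succ w]
    group

theorem pow_in (H : Subgroup G) {w g : G} {k : ℕ} (hw : w ^ k ∈ H)
    (hg : ∃ y, (∀ j, j < k → w ^ j * y * (w ^ j)⁻¹ ∈ H) ∧ ∃ h ∈ H, g = h⁻¹ * (y * w) * h) :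
    g ^ k ∈ H := by
  obtain ⟨y, hy, h, hh, rfl⟩ := hg
  obtain ⟨c, hc, hcw⟩ := conj_chain H hy k le_rfl
  have : (h⁻¹ * (y * w) * h) ^ k = h⁻¹ * (c * w ^ k) * h := by
    rw [← hcw]
    rw [show h⁻¹ * (y * w) * h = h⁻¹ * (y * w) * (h⁻¹)⁻¹ by group, conj_pow]
    group
  rw [this]
  exact H.mul_mem (H.mul_mem (H.inv_mem hh) (H.mul_mem hc hw)) hh

theorem mem_set_of_R (H : Subgroup G) {w g x : G} {k : ℕ} (hk : 1 ≤ k) (hw : w ^ k ∈ H)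
    (hg : g ^ k ∈ H) (hx : ∀ j, j < k → g ^ j * x⁻¹ * (w ^ j)⁻¹ ∈ H) :
    ∃ y, (∀ j, j < k → w ^ j * y * (w ^ j)⁻¹ ∈ H) ∧ ∃ h ∈ H, g = h⁻¹ * (y * w) * h := by
  have hxH : x ∈ H := by
    have h0 := hx 0 (by omega)
    simp only [pow_zero] at h0
    have : x⁻¹ ∈ H := by simpa using h0
    simpa using H.inv_mem this
  refine ⟨x * g * x⁻¹ * w⁻¹, ?_, x, hxH, by group⟩
  intro j hj
  have haj : g ^ j * x⁻¹ * (w ^ j)⁻¹ ∈ H := hx j hj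
  have haj1 : g ^ (j + 1) * x⁻¹ * (w ^ (j + 1))⁻¹ ∈ H := by
    rcases Nat.lt_or_ge (j + 1) k with h | h
    · exact hx (j + 1) h
    · have : j + 1 = k := by omega
      rw [this]
      have := H.mul_mem (H.mul_mem hg (H.inv_mem hxH)) (H.inv_mem hw)
      simpa using this
  have key : w ^ j * (x * g * x⁻¹ * w⁻¹) * (w ^ j)⁻¹
      = (g ^ j * x⁻¹ * (w ^ j)⁻¹)⁻¹ * (g ^ (j + 1) * x⁻¹ * (w ^ (j + 1))⁻¹) := by
    rw [pow_succ g, pow_succ w]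
    group
  rw [key]
  exact H.mul_mem (H.inv_mem haj) haj1

end grouplayer
end KR

/-- Description of the set of `k`-roots of a finitely generated subgroup `H` of a free group of
finite rank: it is the union, over finitely many elements `w₀ = 1, w₁, …, w_t` whose relative
order in `H` divides `k`, of the `H`-conjugates of the cosets
`(H ∩ H^{wᵢ} ∩ ⋯ ∩ H^{wᵢ^{k-1}}) wᵢ`. -/
theorem kRoots_description (n : ℕ) (H : Subgroup (FreeGroup (Fin n))) (hH : H.FG)
    (k : ℕ) (hk : 1 ≤ k) :
    ∃ (t : ℕ) (w : Fin (t + 1) → FreeGroup (Fin n)),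
      w 0 = 1 ∧ (∀ i, relOrd H (w i) ∣ k) ∧
      {g : FreeGroup (Fin n) | g ^ k ∈ H} =
        ⋃ i : Fin (t + 1), {g : FreeGroup (Fin n) |
          ∃ y : FreeGroup (Fin n),
            (∀ j : ℕ, j < k → (w i) ^ j * y * ((w i) ^ j)⁻¹ ∈ H) ∧
            ∃ h ∈ H, g = h⁻¹ * (y * w i) * h} := by
  classical
  obtain ⟨V, hV⟩ := hH
  set B := V.sup (fun z => z.toWord.length) with hBdef
  have hB : ∀ z ∈ V, z.toWord.length ≤ B := fun z hz => by
    simpa using Finset.le_sup (f := fun z : FreeGroup (Fin n) => z.toWord.length) hz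
  have geoAll : ∀ g : FreeGroup (Fin n), ∃ u : FreeGroup (Fin n),
      ∀ j, j ≤ k → ∃ r : FreeGroup (Fin n), r.toWord.length ≤ 2 * B ∧
        (g ^ k ∈ H → g ^ j * u * r⁻¹ ∈ H) := by
    intro g
    by_cases hg : g ^ k ∈ H
    · obtain ⟨u, hu⟩ := KR.geo H V hV B hB hk g hg
      exact ⟨u, fun j hj => (hu j hj).imp (fun r hr => ⟨hr.1, fun _ => hr.2⟩)⟩
    · exact ⟨1, fun j hj => ⟨1, by simp [FreeGroup.toWord_one], fun con => absurd con hg⟩⟩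
  choose u hu using geoAll
  choose! q hq1 hq2 using hu
  set 𝒬 : Set (FreeGroup (Fin n)) := {r | r.toWord.length ≤ 2 * B} with hQdef
  have hQfin : 𝒬.Finite := by
    have hfin := List.finite_length_le (Fin n × Bool) (2 * B)
    exact Set.Finite.preimage (Function.Injective.injOn FreeGroup.toWord_injective) hfin
  set S : Set (FreeGroup (Fin n)) := {g | g ^ k ∈ H} with hSdef
  set sig : FreeGroup (Fin n) → (Fin k → FreeGroup (Fin n)) :=
    (fun g => fun j => q g j.1) with hsigdef
  have hsigfin : (sig '' S).Finite := by
    refine Set.Finite.subset (Set.Finite.pi (fun _ : Fin k => hQfin)) ?_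
    rintro σ ⟨g, hgS, rfl⟩
    intro j _
    exact hq1 g j.1 (le_of_lt j.2)
  have hreps : ∀ σ : Fin k → FreeGroup (Fin n), ∃ g,
      σ ∈ sig '' S → (g ^ k ∈ H ∧ sig g = σ) := by
    intro σ
    by_cases h : σ ∈ sig '' S
    · obtain ⟨g, hgS, hsg⟩ := h
      exact ⟨g, fun _ => ⟨hgS, hsg⟩⟩
    · exact ⟨1, fun c => absurd c h⟩
  choose rep hrep using hreps
  set T := hsigfin.toFinset.toList with hTdef
  set w : Fin (T.length + 1) → FreeGroup (Fin n) :=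
    (fun i => if h : i.1 = 0 then 1
      else rep (T.get ⟨i.1 - 1, by have := i.isLt; omega⟩)) with hwdef
  have hwS : ∀ i, (w i) ^ k ∈ H := by
    intro i
    by_cases h : i.1 = 0
    · rw [hwdef]
      simp only [h, dif_pos]
      simpa using H.one_mem
    · rw [hwdef]
      simp only [h, dif_neg, not_false_iff]
      set σ := T.get ⟨i.1 - 1, by have := i.isLt; omega⟩ with hσ
      have hσT : σ ∈ T := List.get_mem _ _
      have hσS : σ ∈ sig '' S := by
        rw [hTdef] at hσT
        rw [Finset.mem_toList, Set.Finite.mem_toFinset] at hσT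
        exact hσT
      exact (hrep σ hσS).1
  refine ⟨T.length, w, ?_, fun i => KR.relOrd_dvd H _ hk (hwS i), ?_⟩
  · rw [hwdef]
    simp
  · ext g
    simp only [Set.mem_setOf_eq, Set.mem_iUnion]
    constructor
    · intro hg
      have hσS : sig g ∈ sig '' S := ⟨g, hg, rfl⟩
      have hσT : sig g ∈ T := by
        rw [hTdef, Finset.mem_toList, Set.Finite.mem_toFinset]
        exact hσS
      obtain ⟨⟨m, hmlt⟩, hget⟩ := List.mem_iff_get.mp hσT
      refine ⟨⟨m + 1, by omega⟩, ?_⟩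
      have hwi : w ⟨m + 1, by omega⟩ = rep (sig g) := by
        rw [hwdef]
        simp only [dif_neg (by simp : ¬(m + 1 = 0))]
        exact congrArg rep (by rw [← hget]; exact congrArg T.get (Fin.ext (by simp)))
      obtain ⟨hrS, hrsig⟩ := hrep (sig g) hσS
      rw [hwi]
      set wσ := rep (sig g) with hwσ
      refine KR.mem_set_of_R H hk hrS hg (x := u wσ * (u g)⁻¹) ?_
      intro j hj
      have hA : g ^ j * u g * (q g j)⁻¹ ∈ H := hq2 g j (le_of_lt hj) hg
      have hqq : q wσ j = q g j := by
        have := congrFun hrsig ⟨j, hj⟩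
        exact this
      have hBj : wσ ^ j * u wσ * (q g j)⁻¹ ∈ H := by
        rw [← hqq]
        exact hq2 wσ j (le_of_lt hj) hrS
      have : g ^ j * (u wσ * (u g)⁻¹)⁻¹ * (wσ ^ j)⁻¹
          = (g ^ j * u g * (q g j)⁻¹) * (wσ ^ j * u wσ * (q g j)⁻¹)⁻¹ := by
        group
      rw [this]
      exact H.mul_mem hA (H.inv_mem hBj)
    · rintro ⟨i, hgi⟩
      exact KR.pow_in H (hwS i) hgi
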